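/- Let G be an interval graph. Define a partial orientation H as follows: for each vertex u, direct an edge from u to a neighbor v₁ whose interval has maximum right endpoint among neighbors of u, and an edge from u to a neighbor v₂ whose interval has minimum left endpoint among neighbors of u. Then H is a weak r-guidance system for every positive integer r, and has maximum outdegree at most two. -/

import Mathlib

open SimpleGraph

variable {V : Type*}

/-- `H` is a partial orientation of `G`: every directed edge of `H` projects to an edge of `G`. -/
def IsPartialOrientation (G : SimpleGraph V) (H : V → V → Prop) : Prop :=
  ∀ ⦃u v⦄, H u v → G.Adj u v

/-- `oball H v a` is the set of vertices reachable from `v` in `H` by a directed path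
of length at most `a`. -/
def oball (H : V → V → Prop) (v : V) : ℕ → Set V
  | 0 => {v}
  | a + 1 => oball H v a ∪ {w | ∃ x ∈ oball H v a, H x w}

/-- `gate G u v` is the set of neighbors of `u` at distance `dist u v - 1` from `v`,
i.e. the possible second vertices of shortest `u`-`v` paths. -/
def gate (G : SimpleGraph V) (u v : V) : Set V :=
  {y | G.Adj u y ∧ G.dist y v = G.dist u v - 1}

/-- `H` is a weak `r`-guidance system of `G`: for distinct `u,v` at distance `ℓ ≤ r`
there are `a + b = ℓ - 1` and an edge of `G` between `oball H u a` and `oball H v b`. -/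
def IsWeakGuidance (G : SimpleGraph V) (H : V → V → Prop) (r : ℕ) : Prop :=
  ∀ u v : V, u ≠ v → G.Reachable u v → G.dist u v ≤ r →
    ∃ a b : ℕ, a + b = G.dist u v - 1 ∧ ∃ x ∈ oball H u a, ∃ y ∈ oball H v b, G.Adj x y

/-- Gate formulation of weak `r`-guidance systems: for `u,v` at distance `ℓ` with
`2 ≤ ℓ ≤ r`, `u` has an outneighbor in `gate G u v` or `v` has one in `gate G v u`. -/
def IsWeakGuidanceGate (G : SimpleGraph V) (H : V → V → Prop) (r : ℕ) : Prop :=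
  ∀ u v : V, 2 ≤ G.dist u v → G.dist u v ≤ r →
    (∃ y ∈ gate G u v, H u y) ∨ (∃ y ∈ gate G v u, H v y)

/-- The outdegree of `u` in the partial orientation `H`. -/
noncomputable def outdeg (H : V → V → Prop) (u : V) : ℕ := {v | H u v}.ncard

lemma oball_subset_of_rel {H : V → V → Prop} {u y : V} (h : H u y) :
    ∀ a, oball H y a ⊆ oball H u (a + 1)
  | 0 => by
    intro w hw
    simp only [oball, Set.mem_singleton_iff] at hw
    subst hw
    exact Or.inr ⟨u, rfl, h⟩
  | a + 1 => by
    intro w hw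
    rcases hw with hw | ⟨x, hx, hxw⟩
    · exact Or.inl (oball_subset_of_rel h a hw)
    · exact Or.inr ⟨x, oball_subset_of_rel h a hx, hxw⟩

/-- Let `G` be the interval graph of open intervals `(le v, re v)`. Direct from each vertex
`u` an edge to a neighbor `f u` whose interval has maximum right endpoint among neighbors
of `u`, and an edge to a neighbor `g u` whose interval has minimum left endpoint among
neighbors of `u`. The resulting partial orientation `H` is a weak `r`-guidance system
for every positive integer `r`, of maximum outdegree at most two. -/
theorem intervalGraph_weakGuidance {V : Type*} (le re : V → ℝ) (hint : ∀ v, le v < re v)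
    (G : SimpleGraph V)
    (hG : ∀ u v, G.Adj u v ↔ (u ≠ v ∧ max (le u) (le v) < min (re u) (re v)))
    (f g : V → V)
    (hf : ∀ u, (∃ w, G.Adj u w) →
      G.Adj u (f u) ∧ ∀ z, G.Adj u z → re z ≤ re (f u))
    (hg : ∀ u, (∃ w, G.Adj u w) →
      G.Adj u (g u) ∧ ∀ z, G.Adj u z → le (g u) ≤ le z)
    (H : V → V → Prop)
    (hH : ∀ x y, H x y ↔ ((∃ w, G.Adj x w) ∧ (y = f x ∨ y = g x))) :
    IsPartialOrientation G H ∧ (∀ r : ℕ, 1 ≤ r → IsWeakGuidance G H r) ∧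
      ∀ u, outdeg H u ≤ 2 := by
  have hPO : IsPartialOrientation G H := by
    intro u v huv
    rw [hH] at huv
    obtain ⟨hex, hv⟩ := huv
    rcases hv with rfl | rfl
    · exact (hf u hex).1
    · exact (hg u hex).1
  refine ⟨hPO, ?_, ?_⟩
  · -- key gate step
    have key : ∀ u v : V, G.Reachable u v → 2 ≤ G.dist u v →
        ∃ y, H u y ∧ G.Adj u y ∧ G.dist y v = G.dist u v - 1 := by
      intro u v hr h2
      obtain ⟨p, hp⟩ := hr.exists_walk_length_eq_dist
      match p, hp with
      | .nil, hp => simp [Walk.length_nil] at hp; simp at h2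
      | .cons h .nil, hp => simp [Walk.length_cons, Walk.length_nil] at hp; omega
      | .cons (v := p1) h (.cons (v := p2) h2' q2), hp =>
        simp only [Walk.length_cons] at hp
        -- q2 : Walk p2 v with length = dist u v - 2
        have hd2 : G.dist p2 v ≤ G.dist u v - 2 := by
          have := SimpleGraph.dist_le q2; omega
        have hnadj : ¬ G.Adj u p2 := by
          intro hadj
          have := SimpleGraph.dist_le (Walk.cons hadj q2)
          simp only [Walk.length_cons] at this; omega
        have hne2 : u ≠ p2 := by
          rintro rfl
          have := SimpleGraph.dist_le q2; omega
        -- intervals of u and p2 are disjoint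
        have hdisj : re u ≤ le p2 ∨ re p2 ≤ le u := by
          by_contra hc
          push_neg at hc
          exact hnadj ((hG u p2).2 ⟨hne2, by
            rcases hc with ⟨h1, h2⟩
            have := hint u; have := hint p2
            simp only [max_lt_iff, lt_min_iff]
            refine ⟨⟨?_, ?_⟩, ?_, ?_⟩ <;> linarith⟩)
        have hexu : ∃ w, G.Adj u w := ⟨p1, h⟩
        have hadj1 := (hG u p1).1 h
        have hadj12 := (hG p1 p2).1 h2'
        have hmaxle1 : max (le u) (le p1) < min (re u) (re p1) := hadj1.2
        have hmaxle2 : max (le p1) (le p2) < min (re p1) (re p2) := hadj12.2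
        simp only [max_lt_iff, lt_min_iff] at hmaxle1 hmaxle2
        -- pick the candidate y and prove G.Adj y p2
        have hcand : ∃ y, H u y ∧ G.Adj u y ∧ G.Adj y p2 := by
          rcases hdisj with hright | hleft
          · obtain ⟨hadjf, hmaxf⟩ := hf u hexu
            have hrf : re p1 ≤ re (f u) := hmaxf p1 h
            have hlef : le (f u) < re u := by
              have := ((hG u (f u)).1 hadjf).2
              simp only [max_lt_iff, lt_min_iff] at this
              exact this.1.2
            have hnef : f u ≠ p2 := by rintro hfu; exact hnadj (hfu ▸ hadjf)
            refine ⟨f u, (hH u (f u)).2 ⟨hexu, Or.inl rfl⟩, hadjf, (hG (f u) p2).2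
              ⟨hnef, ?_⟩⟩
            have := hint p2
            simp only [max_lt_iff, lt_min_iff]
            refine ⟨⟨?_, ?_⟩, ?_, ?_⟩ <;> linarith [hmaxle2.1.2]
          · obtain ⟨hadjg, hming⟩ := hg u hexu
            have hlg : le (g u) ≤ le p1 := hming p1 h
            have hreg : le u < re (g u) := by
              have := ((hG u (g u)).1 hadjg).2
              simp only [max_lt_iff, lt_min_iff] at this
              exact this.2.1
            have hneg : g u ≠ p2 := by rintro hgu; exact hnadj (hgu ▸ hadjg)
            refine ⟨g u, (hH u (g u)).2 ⟨hexu, Or.inr rfl⟩, hadjg, (hG (g u) p2).2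
              ⟨hneg, ?_⟩⟩
            have := hint p2
            simp only [max_lt_iff, lt_min_iff]
            refine ⟨⟨?_, ?_⟩, ?_, ?_⟩ <;> linarith [hmaxle2.2.1]
        obtain ⟨y, hHy, hadjy, hadjyp2⟩ := hcand
        refine ⟨y, hHy, hadjy, ?_⟩
        have hub : G.dist y v ≤ G.dist u v - 1 := by
          have := SimpleGraph.dist_le (Walk.cons hadjyp2 q2)
          simp only [Walk.length_cons] at this; omega
        have hlb : G.dist u v ≤ 1 + G.dist y v := by
          have hry : G.Reachable y v := (Adj.reachable hadjy).symm.trans hr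
          obtain ⟨q', hq'⟩ := hry.exists_walk_length_eq_dist
          have := SimpleGraph.dist_le (Walk.cons hadjy q')
          simp only [Walk.length_cons] at this; omega
        omega
    -- main induction
    have main : ∀ n, ∀ u v : V, u ≠ v → G.Reachable u v → G.dist u v = n →
        ∃ a b : ℕ, a + b = n - 1 ∧ ∃ x ∈ oball H u a, ∃ y ∈ oball H v b, G.Adj x y := by
      intro n
      induction n using Nat.strong_induction_on with
      | _ n ih =>
        intro u v hne hr hd
        have hpos : 1 ≤ n := by
          rcases Nat.eq_zero_or_pos n with h0 | h1
          · exfalso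
            exact hne (by rw [← hd] at h0; exact (hr.dist_eq_zero_iff.mp h0))
          · exact h1
        rcases Nat.lt_or_ge n 2 with h1 | h2
        · -- n = 1 : adjacent
          have hn1 : n = 1 := by omega
          have hadj : G.Adj u v := SimpleGraph.dist_eq_one_iff_adj.mp (hn1 ▸ hd)
          exact ⟨0, 0, by omega, u, rfl, v, rfl, hadj⟩
        · obtain ⟨y, hHy, hadjy, hdy⟩ := key u v hr (hd ▸ h2)
          have hdy' : G.dist y v = n - 1 := by omega
          have hyne : y ≠ v := by
            rintro rfl
            rw [SimpleGraph.dist_self] at hdy'; omega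
          have hry : G.Reachable y v := (Adj.reachable hadjy).symm.trans hr
          obtain ⟨a, b, hab, x, hx, y', hy', hxy'⟩ :=
            ih (n - 1) (by omega) y v hyne hry hdy'
          exact ⟨a + 1, b, by omega, x, oball_subset_of_rel hHy a hx, y', hy', hxy'⟩
    intro r _ u v hne hr _
    exact main (G.dist u v) u v hne hr rfl
  · -- outdegree
    intro u
    have hsub : {v | H u v} ⊆ {f u, g u} := by
      intro v hv
      rw [Set.mem_setOf_eq, hH] at hv
      rcases hv.2 with rfl | rfl
      · exact Set.mem_insert _ _
      · exact Set.mem_insert_of_mem _ rfl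
    calc outdeg H u ≤ ({f u, g u} : Set V).ncard :=
          Set.ncard_le_ncard hsub ((Set.finite_singleton (g u)).insert (f u))
      _ ≤ 2 := Set.ncard_insert_le _ _ |>.trans (by simp)
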